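/- Let b be a completely multiplicative arithmetic function with values in ℝ (or ℂ), let x ≥ 2 and j a positive integer. Then (Σ_{p ≤ x} b(p))^j = j! · Σ_{n : p|n ⟹ p ≤ x, Ω(n) = j} b(n)·ν(n), where ν is the multiplicative function with ν(p^a) = 1/a! and Ω counts prime factors with multiplicity. -/

import Mathlib

open scoped Classical

open Finset

private lemma b_prod_aux (b : ℕ → ℝ)
    (hbmult : ∀ m n : ℕ, b (m * n) = b m * b n) (hb1 : b 1 = 1)
    (s : Finset ℕ) (f : ℕ → ℕ) :
    b (∏ p ∈ s, f p) = ∏ p ∈ s, b (f p) := by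
  induction s using Finset.cons_induction with
  | empty => simpa
  | cons a s ha ih => rw [prod_cons, prod_cons, hbmult, ih]

private lemma b_pow_aux (b : ℕ → ℝ)
    (hbmult : ∀ m n : ℕ, b (m * n) = b m * b n) (hb1 : b 1 = 1)
    (m a : ℕ) : b (m ^ a) = b m ^ a := by
  induction a with
  | zero => simpa
  | succ n ih => rw [pow_succ, pow_succ, hbmult, ih]

private lemma nu_prod_aux (ν : ℕ → ℝ) (hν1 : ν 1 = 1)
    (hνmult : ∀ m n : ℕ, Nat.Coprime m n → ν (m * n) = ν m * ν n)
    (hνpp : ∀ p a : ℕ, p.Prime → 1 ≤ a → ν (p ^ a) = 1 / (a.factorial : ℝ))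
    (s : Finset ℕ) (hs : ∀ p ∈ s, p.Prime) (k : ℕ → ℕ) :
    ν (∏ p ∈ s, p ^ k p) = ∏ p ∈ s, (1 / ((k p).factorial : ℝ)) := by
  induction s using Finset.cons_induction with
  | empty => simpa
  | cons a s ha ih =>
    have hap := hs a (mem_cons_self a s)
    have hcop : Nat.Coprime (a ^ k a) (∏ p ∈ s, p ^ k p) := by
      apply Nat.Coprime.pow_left
      apply Nat.Coprime.prod_right
      intro q hq
      apply Nat.Coprime.pow_right
      exact (Nat.coprime_primes hap (hs q (mem_cons_of_mem hq))).2
        (by rintro rfl; exact ha hq)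
    rw [prod_cons, prod_cons, hνmult _ _ hcop,
      ih (fun p hp => hs p (mem_cons_of_mem hp))]
    congr 1
    rcases Nat.eq_zero_or_pos (k a) with h | h
    · simp [h, hν1]
    · exact hνpp a (k a) hap h

private lemma omega_prod_aux (s : Finset ℕ) (hs : ∀ p ∈ s, p.Prime) (k : ℕ → ℕ) :
    ArithmeticFunction.cardFactors (∏ p ∈ s, p ^ k p) = ∑ p ∈ s, k p := by
  induction s using Finset.cons_induction with
  | empty => simp
  | cons a s ha ih =>
    have h1 : (a ^ k a) ≠ 0 := pow_ne_zero _ (hs a (mem_cons_self a s)).pos.ne'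
    have h2 : (∏ p ∈ s, p ^ k p) ≠ 0 :=
      (Finset.prod_pos fun p hp => pow_pos (hs p (mem_cons_of_mem hp)).pos _).ne'
    rw [prod_cons, sum_cons, ArithmeticFunction.cardFactors_mul h1 h2,
      ArithmeticFunction.cardFactors_apply_prime_pow (hs a (mem_cons_self a s)),
      ih (fun p hp => hs p (mem_cons_of_mem hp))]

private lemma fact_prod_apply_aux (s : Finset ℕ) (hs : ∀ p ∈ s, p.Prime) (k : ℕ → ℕ)
    (q : ℕ) (hq : q ∈ s) :
    (∏ p ∈ s, p ^ k p).factorization q = k q := by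
  rw [Nat.factorization_prod (fun p hp => pow_ne_zero _ (hs p hp).pos.ne'),
    Finsupp.finset_sum_apply, Finset.sum_eq_single q]
  · rw [Nat.factorization_pow, (hs q hq).factorization, Finsupp.smul_apply,
      Finsupp.single_eq_same, smul_eq_mul, mul_one]
  · intro p hp hpq
    rw [Nat.factorization_pow, (hs p hp).factorization, Finsupp.smul_apply,
      Finsupp.single_eq_of_ne hpq.symm, smul_eq_mul, mul_zero]
  · intro h; exact absurd hq h

theorem sum_primes_pow_eq (b : ℕ → ℝ) (hb1 : b 1 = 1)
    (hbmult : ∀ m n : ℕ, b (m * n) = b m * b n)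
    (ν : ℕ → ℝ) (hν1 : ν 1 = 1)
    (hνmult : ∀ m n : ℕ, Nat.Coprime m n → ν (m * n) = ν m * ν n)
    (hνpp : ∀ p a : ℕ, p.Prime → 1 ≤ a → ν (p ^ a) = 1 / (a.factorial : ℝ))
    (x : ℝ) (hx : 2 ≤ x) (j : ℕ) (hj : 0 < j) :
    (∑ p ∈ (Finset.range (⌊x⌋₊ + 1)).filter (fun p : ℕ => p.Prime ∧ (p : ℝ) ≤ x), b p) ^ j
      = (j.factorial : ℝ) *
        ∑ n ∈ (Finset.Icc 1 (⌊x⌋₊ ^ j)).filter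
            (fun n : ℕ => (∀ p : ℕ, p.Prime → p ∣ n → (p : ℝ) ≤ x) ∧
              ArithmeticFunction.cardFactors n = j),
          b n * ν n := by
  classical
  set S := (Finset.range (⌊x⌋₊ + 1)).filter (fun p : ℕ => p.Prime ∧ (p : ℝ) ≤ x) with hS
  have hSp : ∀ p ∈ S, p.Prime := fun p hp => (Finset.mem_filter.1 hp).2.1
  have hSx : ∀ p ∈ S, (p : ℝ) ≤ x := fun p hp => (Finset.mem_filter.1 hp).2.2
  have hSmem : ∀ p : ℕ, p.Prime → (p : ℝ) ≤ x → p ∈ S := by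
    intro p hp hpx
    refine Finset.mem_filter.2 ⟨Finset.mem_range.2 ?_, hp, hpx⟩
    exact Nat.lt_succ_of_le (Nat.le_floor hpx)
  rw [Finset.sum_pow_eq_sum_piAntidiag, Finset.mul_sum]
  refine Finset.sum_nbij' (fun k => ∏ p ∈ S, p ^ k p)
    (fun n p => if p ∈ S then n.factorization p else 0) ?_ ?_ ?_ ?_ ?_
  · -- maps into target
    intro k hk
    rw [Finset.mem_piAntidiag] at hk
    obtain ⟨hsum, hsupp⟩ := hk
    have hpos : 0 < ∏ p ∈ S, p ^ k p :=
      Finset.prod_pos fun p hp => pow_pos (hSp p hp).pos _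
    refine Finset.mem_filter.2 ⟨Finset.mem_Icc.2 ⟨hpos, ?_⟩, ?_, ?_⟩
    · calc ∏ p ∈ S, p ^ k p ≤ ∏ p ∈ S, ⌊x⌋₊ ^ k p := by
            refine Finset.prod_le_prod' fun p hp => ?_
            exact Nat.pow_le_pow_left (Nat.le_floor (hSx p hp)) _
        _ = ⌊x⌋₊ ^ ∑ p ∈ S, k p := Finset.prod_pow_eq_pow_sum S k _
        _ = ⌊x⌋₊ ^ j := by rw [hsum]
    · intro q hq hqdvd
      obtain ⟨p, hp, hqp⟩ := (Nat.Prime.prime hq).exists_mem_finset_dvd hqdvd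
      have : q = p :=
        ((Nat.prime_dvd_prime_iff_eq hq (hSp p hp)).1 (hq.dvd_of_dvd_pow hqp))
      exact this ▸ hSx p hp
    · rw [omega_prod_aux S hSp k, hsum]
  · -- reverse maps into piAntidiag
    intro n hn
    rw [Finset.mem_filter, Finset.mem_Icc] at hn
    obtain ⟨⟨hn1, _⟩, hnx, hnj⟩ := hn
    have hn0 : n ≠ 0 := Nat.one_le_iff_ne_zero.1 hn1
    have hsub : n.factorization.support ⊆ S := by
      intro p hp
      rw [Nat.support_factorization, Nat.mem_primeFactors] at hp
      exact hSmem p hp.1 (hnx p hp.1 hp.2.1)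
    rw [Finset.mem_piAntidiag]
    constructor
    · have : ∑ p ∈ S, (if p ∈ S then n.factorization p else 0) =
          ∑ p ∈ S, n.factorization p :=
        Finset.sum_congr rfl fun p hp => if_pos hp
      rw [this, ← Finset.sum_subset hsub
        (fun p _ hp => Finsupp.notMem_support_iff.1 hp)]
      have hrep : n = ∏ p ∈ n.factorization.support, p ^ n.factorization p := by
        conv_lhs => rw [← Nat.factorization_prod_pow_eq_self hn0]
        rfl
      have := omega_prod_aux n.factorization.support
        (fun p hp => Nat.prime_of_mem_primeFactors
          (by rwa [← Nat.support_factorization])) n.factorization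
      rw [← hrep] at this
      rw [← this, hnj]
    · intro p hp
      by_contra hps
      exact hp (if_neg hps)
  · -- left inverse
    intro k hk
    rw [Finset.mem_piAntidiag] at hk
    funext q
    by_cases hq : q ∈ S
    · simp only [if_pos hq]
      exact fact_prod_apply_aux S hSp k q hq
    · simp only [if_neg hq]
      by_contra h
      exact hq (hk.2 q (fun h' => h h'.symm))
  · -- right inverse
    intro n hn
    rw [Finset.mem_filter, Finset.mem_Icc] at hn
    obtain ⟨⟨hn1, _⟩, hnx, hnj⟩ := hn
    have hn0 : n ≠ 0 := Nat.one_le_iff_ne_zero.1 hn1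
    have hsub : n.factorization.support ⊆ S := by
      intro p hp
      rw [Nat.support_factorization, Nat.mem_primeFactors] at hp
      exact hSmem p hp.1 (hnx p hp.1 hp.2.1)
    have h1 : ∏ p ∈ S, p ^ (if p ∈ S then n.factorization p else 0) =
        ∏ p ∈ S, p ^ n.factorization p :=
      Finset.prod_congr rfl fun p hp => by rw [if_pos hp]
    show (∏ p ∈ S, p ^ (if p ∈ S then n.factorization p else 0)) = n
    rw [h1, ← Finset.prod_subset hsub
      (fun p _ hp => by rw [Finsupp.notMem_support_iff.1 hp, pow_zero])]
    conv_rhs => rw [← Nat.factorization_prod_pow_eq_self hn0]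
    rfl
  · -- summands agree
    intro k hk
    rw [Finset.mem_piAntidiag] at hk
    obtain ⟨hsum, _⟩ := hk
    have hb : b (∏ p ∈ S, p ^ k p) = ∏ p ∈ S, b p ^ k p := by
      rw [b_prod_aux b hbmult hb1]
      exact Finset.prod_congr rfl fun p _ => b_pow_aux b hbmult hb1 p (k p)
    have hν : ν (∏ p ∈ S, p ^ k p) = ∏ p ∈ S, (1 / ((k p).factorial : ℝ)) :=
      nu_prod_aux ν hν1 hνmult hνpp S hSp k
    rw [hb, hν]
    have hspec : ((∏ p ∈ S, (k p).factorial : ℕ) : ℝ) * (Nat.multinomial S k : ℝ)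
        = (j.factorial : ℝ) := by
      rw [← Nat.cast_mul, Nat.multinomial_spec, hsum]
    have hne : ((∏ p ∈ S, (k p).factorial : ℕ) : ℝ) ≠ 0 := by
      exact_mod_cast (Finset.prod_pos fun p _ => Nat.factorial_pos _).ne'
    rw [← hspec]
    push_cast
    rw [Finset.prod_div_distrib]
    field_simp
    rw [Finset.prod_const_one]
    ring
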